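/- If y₁ and y₂ are C⁴ solutions on ℝ of the ODE y''''·(y')² - 3·y'''·y''·y' + 2(1 - n⁻²)·(y'')³ = 0, and there exists a point a such that y₁ is constant on [a, ∞) and y₂ is constant on (-∞, a] with y₁(a) = y₂(a), and moreover y₁ + y₂ - y₁(a) is C⁴ at a, then y₁ + y₂ - y₁(a) is a solution on all of ℝ. -/
import Mathlib

open Topology Filter

private lemma iterWithin_open {f : ℝ → ℝ} {s : Set ℝ} {x : ℝ} (hs : IsOpen s) (hx : x ∈ s)
    (m : ℕ) : iteratedDerivWithin m f s x = iteratedDeriv m f x := by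
  simp [iteratedDerivWithin, iteratedDeriv, iteratedFDerivWithin_of_isOpen m hs hx]

private lemma contAt_iter {f : ℝ → ℝ} {x : ℝ} (h : ContDiffAt ℝ 4 f x) {m : ℕ} (hm : m ≤ 4) :
    ContinuousAt (iteratedDeriv m f) x := by
  obtain ⟨u, hu, hcd⟩ := h.contDiffOn (le_refl _) (by simp)
  obtain ⟨v, hvu, hv, hxv⟩ := mem_nhds_iff.1 hu
  have hcont : ContinuousOn (iteratedDerivWithin m f v) v :=
    (hcd.mono hvu).continuousOn_iteratedDerivWithin (by exact_mod_cast hm) hv.uniqueDiffOn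
  have : ContinuousOn (iteratedDeriv m f) v :=
    hcont.congr fun z hz => (iterWithin_open hv hz m).symm
  exact this.continuousAt (hv.mem_nhds hxv)

theorem stmt_8 (n : ℤ) (hn : 3 < n) (y₁ y₂ : ℝ → ℝ)
    (hy₁ : ContDiff ℝ 4 y₁) (hy₂ : ContDiff ℝ 4 y₂)
    (hsol₁ : ∀ x, iteratedDeriv 4 y₁ x * deriv y₁ x ^ 2
        - 3 * iteratedDeriv 3 y₁ x * iteratedDeriv 2 y₁ x * deriv y₁ x
        + 2 * (1 - ((n : ℝ) ^ 2)⁻¹) * iteratedDeriv 2 y₁ x ^ 3 = 0)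
    (hsol₂ : ∀ x, iteratedDeriv 4 y₂ x * deriv y₂ x ^ 2
        - 3 * iteratedDeriv 3 y₂ x * iteratedDeriv 2 y₂ x * deriv y₂ x
        + 2 * (1 - ((n : ℝ) ^ 2)⁻¹) * iteratedDeriv 2 y₂ x ^ 3 = 0)
    (a : ℝ)
    (hc₁ : ∀ x, a ≤ x → y₁ x = y₁ a)
    (hc₂ : ∀ x, x ≤ a → y₂ x = y₂ a)
    (hval : y₁ a = y₂ a)
    (y : ℝ → ℝ) (hy : y = fun x => y₁ x + y₂ x - y₁ a)
    (hC4 : ContDiffAt ℝ 4 y a) :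
    ∀ x, iteratedDeriv 4 y x * deriv y x ^ 2
        - 3 * iteratedDeriv 3 y x * iteratedDeriv 2 y x * deriv y x
        + 2 * (1 - ((n : ℝ) ^ 2)⁻¹) * iteratedDeriv 2 y x ^ 3 = 0 := by
  set E : (ℝ → ℝ) → ℝ → ℝ := fun f x => iteratedDeriv 4 f x * deriv f x ^ 2
      - 3 * iteratedDeriv 3 f x * iteratedDeriv 2 f x * deriv f x
      + 2 * (1 - ((n : ℝ) ^ 2)⁻¹) * iteratedDeriv 2 f x ^ 3 with hE
  suffices h : ∀ x, E y x = 0 by exact h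
  -- y agrees with y₁ on (-∞, a] and with y₂ on [a, ∞)
  have hyl : ∀ x ≤ a, y x = y₁ x := by
    intro x hx; simp [hy, hc₂ x hx, hval.symm]
  have hyr : ∀ x, a ≤ x → y x = y₂ x := by
    intro x hx; simp [hy, hc₁ x hx, hval]
  have key : ∀ x ≠ a, E y x = 0 := by
    intro x hx
    rcases lt_or_gt_of_ne hx with hlt | hgt
    · have heq : y =ᶠ[𝓝 x] y₁ := by
        filter_upwards [Iio_mem_nhds hlt] with z hz
        exact hyl z (le_of_lt hz)
      have h4 := heq.iteratedDeriv_eq 4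
      have h3 := heq.iteratedDeriv_eq 3
      have h2 := heq.iteratedDeriv_eq 2
      have h1 := heq.iteratedDeriv_eq 1
      simp only [iteratedDeriv_one] at h1
      simp only [hE, h4, h3, h2, h1]
      exact hsol₁ x
    · have heq : y =ᶠ[𝓝 x] y₂ := by
        filter_upwards [Ioi_mem_nhds hgt] with z hz
        exact hyr z (le_of_lt hz)
      have h4 := heq.iteratedDeriv_eq 4
      have h3 := heq.iteratedDeriv_eq 3
      have h2 := heq.iteratedDeriv_eq 2
      have h1 := heq.iteratedDeriv_eq 1
      simp only [iteratedDeriv_one] at h1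
      simp only [hE, h4, h3, h2, h1]
      exact hsol₂ x
  intro x
  rcases eq_or_ne x a with rfl | hxa
  · -- continuity argument at a
    have hcE : ContinuousAt (E y) x := by
      have c4 := contAt_iter hC4 (le_refl 4)
      have c3 := contAt_iter hC4 (by norm_num : (3:ℕ) ≤ 4)
      have c2 := contAt_iter hC4 (by norm_num : (2:ℕ) ≤ 4)
      have c1 := contAt_iter hC4 (by norm_num : (1:ℕ) ≤ 4)
      rw [iteratedDeriv_one] at c1
      exact (((c4.mul (c1.pow 2)).sub
        (((continuousAt_const.mul c3).mul c2).mul c1)).add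
        (continuousAt_const.mul (c2.pow 3)))
    have h0 : Tendsto (E y) (𝓝[≠] x) (𝓝 0) := by
      have : E y =ᶠ[𝓝[≠] x] fun _ => 0 := by
        filter_upwards [self_mem_nhdsWithin] with z hz
        exact key z hz
      exact Tendsto.congr' this.symm tendsto_const_nhds
    have h1 : Tendsto (E y) (𝓝[≠] x) (𝓝 (E y x)) :=
      (hcE.tendsto).mono_left nhdsWithin_le_nhds
    exact tendsto_nhds_unique h1 h0
  · exact key x hxa
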